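/- Let φ: [0,∞) → ℝ ∪ {∞} be convex with φ(1)=0 and φ(0)=lim_{x↓0} φ(x), let ℙ be a probability measure, δ > 0, and 𝓟_φ(ℙ,δ) = {ℚ ≪ ℙ : E^ℙ[φ(dℚ/dℙ)] ≤ δ}. Then for every event A with 0 < ℙ(A) < 1, sup_{ℚ ∈ 𝓟_φ(ℙ,δ)} ℚ(A) = sup{t ∈ [ℙ(A),1] : ℙ(A)·φ(t/ℙ(A)) + (1−ℙ(A))·φ((1−t)/(1−ℙ(A))) ≤ δ}. -/

import Mathlib

open Set MeasureTheory Filter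

/-- The positive part of an extended real, as an extended nonnegative real. -/
noncomputable def ePos (a : EReal) : ENNReal :=
  if a = ⊤ then ⊤ else ENNReal.ofReal a.toReal

/-- The (extended-real-valued) integral of an `EReal`-valued function:
integral of the positive part minus integral of the negative part. -/
noncomputable def eIntegral {Ω : Type*} [MeasurableSpace Ω] (μ : Measure Ω)
    (f : Ω → EReal) : EReal :=
  ((∫⁻ ω, ePos (f ω) ∂μ : ENNReal) : EReal) - ((∫⁻ ω, ePos (-(f ω)) ∂μ : ENNReal) : EReal)

open scoped ENNReal NNReal

lemma ePos_coe (r : ℝ) : ePos (r : EReal) = ENNReal.ofReal r := by simp [ePos]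
@[simp] lemma ePos_top : ePos ⊤ = ⊤ := by simp [ePos]
@[simp] lemma ePos_bot : ePos ⊥ = 0 := by simp [ePos]
lemma ePos_ne_top {a : EReal} (h : a ≠ ⊤) : ePos a ≠ ⊤ := by simp [ePos, h]


lemma ePos_mono {a b : EReal} (h : a ≤ b) : ePos a ≤ ePos b := by
  induction a using EReal.rec with
  | bot => simp
  | top => rw [top_le_iff.mp h]
  | coe r =>
    induction b using EReal.rec with
    | bot => simp at h
    | top => simp
    | coe s =>
      rw [ePos_coe, ePos_coe]
      exact ENNReal.ofReal_le_ofReal (EReal.coe_le_coe_iff.mp h)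

lemma coe_ennreal_finite {x : ℝ≥0∞} (hx : x ≠ ⊤) : (x : EReal) = ((x.toReal : ℝ) : EReal) := by
  conv_lhs => rw [← ENNReal.ofReal_toReal hx]
  rw [EReal.coe_ennreal_ofReal, max_eq_left ENNReal.toReal_nonneg]

lemma ofReal_max_zero (x : ℝ) : ENNReal.ofReal (max x 0) = ENNReal.ofReal x := by
  rcases le_total x 0 with h | h
  · rw [max_eq_right h, ENNReal.ofReal_zero, ENNReal.ofReal_eq_zero.mpr h]
  · rw [max_eq_left h]

lemma ePos_add_ePos_neg_le {a b : EReal} (h : b ≤ a) :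
    ePos b + ePos (-a) ≤ ePos a + ePos (-b) := by
  induction b using EReal.rec with
  | bot => simp
  | top => rw [top_le_iff.mp h]
  | coe rb =>
    induction a using EReal.rec with
    | bot => simp at h
    | top => simp
    | coe ra =>
      rw [← EReal.coe_neg, ← EReal.coe_neg, ePos_coe, ePos_coe, ePos_coe, ePos_coe,
        ← ofReal_max_zero rb, ← ofReal_max_zero (-ra), ← ofReal_max_zero ra,
        ← ofReal_max_zero (-rb), ← ENNReal.ofReal_add (le_max_right _ _) (le_max_right _ _),
        ← ENNReal.ofReal_add (le_max_right _ _) (le_max_right _ _)]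
      have hba : rb ≤ ra := EReal.coe_le_coe_iff.mp h
      apply ENNReal.ofReal_le_ofReal
      simp only [max_def]
      split_ifs <;> linarith

lemma eSub_le_eSub {x₁ x₂ y₁ y₂ : ℝ≥0∞} (h : x₂ + y₁ ≤ x₁ + y₂) (hy₁ : y₁ ≠ ⊤) :
    (x₂ : EReal) - (y₂ : EReal) ≤ (x₁ : EReal) - (y₁ : EReal) := by
  by_cases hy₂ : y₂ = ⊤
  · rw [hy₂, EReal.coe_ennreal_top, EReal.sub_top]; exact bot_le
  by_cases hx₁ : x₁ = ⊤
  · rw [hx₁, EReal.coe_ennreal_top, coe_ennreal_finite hy₁, EReal.top_sub_coe]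
    exact le_top
  have hx₂ : x₂ ≠ ⊤ := by
    intro hx₂
    rw [hx₂, top_add, top_le_iff, ENNReal.add_eq_top] at h
    tauto
  rw [coe_ennreal_finite hy₁, coe_ennreal_finite hy₂, coe_ennreal_finite hx₁,
    coe_ennreal_finite hx₂, ← EReal.coe_sub, ← EReal.coe_sub, EReal.coe_le_coe_iff]
  have h' := ENNReal.toReal_mono (by simp [ENNReal.add_eq_top, hx₁, hy₂]) h
  rw [ENNReal.toReal_add hx₂ hy₁, ENNReal.toReal_add hx₁ hy₂] at h'
  linarith

lemma eSub_add_eq {a b c d : ℝ≥0∞} (hc : c ≠ ⊤) (hd : d ≠ ⊤) :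
    ((a + b : ℝ≥0∞) : EReal) - ((c + d : ℝ≥0∞) : EReal)
      = ((a : EReal) - c) + ((b : EReal) - d) := by
  have hcd : c + d ≠ ⊤ := by simp [ENNReal.add_eq_top, hc, hd]
  by_cases ha : a = ⊤
  · have hbd : (b : EReal) - d ≠ ⊥ := by
      intro hbd
      rw [coe_ennreal_finite hd] at hbd
      induction b using ENNReal.recTopCoe with
      | top => rw [EReal.coe_ennreal_top, EReal.top_sub_coe] at hbd; simp at hbd
      | coe r => rw [coe_ennreal_finite (by simp), ← EReal.coe_sub] at hbd; exact EReal.coe_ne_bot _ hbd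
    rw [ha, top_add, EReal.coe_ennreal_top, coe_ennreal_finite hcd,
      coe_ennreal_finite hc, EReal.top_sub_coe, EReal.top_sub_coe, EReal.top_add_of_ne_bot hbd]
  by_cases hb : b = ⊤
  · have had : (a : EReal) - c ≠ ⊥ := by
      rw [coe_ennreal_finite ha, coe_ennreal_finite hc, ← EReal.coe_sub]
      exact EReal.coe_ne_bot _
    rw [hb, add_top, EReal.coe_ennreal_top, coe_ennreal_finite hcd,
      coe_ennreal_finite hd, EReal.top_sub_coe, EReal.top_sub_coe,
      EReal.add_top_of_ne_bot had]
  have hab : a + b ≠ ⊤ := by simp [ENNReal.add_eq_top, ha, hb]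
  rw [coe_ennreal_finite ha, coe_ennreal_finite hb, coe_ennreal_finite hc,
    coe_ennreal_finite hd, coe_ennreal_finite hab, coe_ennreal_finite hcd,
    ENNReal.toReal_add ha hb, ENNReal.toReal_add hc hd,
    ← EReal.coe_sub, ← EReal.coe_sub, ← EReal.coe_sub, ← EReal.coe_add, EReal.coe_eq_coe_iff]
  ring

lemma ePos_mul_sub {a : EReal} (ha : a ≠ ⊥) {w : ℝ≥0∞} (hw : w ≠ ⊤) :
    ((ePos a * w : ℝ≥0∞) : EReal) - ((ePos (-a) * w : ℝ≥0∞) : EReal)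
      = ((w.toReal : ℝ) : EReal) * a := by
  induction a using EReal.rec with
  | bot => exact absurd rfl ha
  | top =>
    rw [ePos_top, EReal.neg_top, ePos_bot, zero_mul, EReal.coe_ennreal_zero, sub_eq_add_neg,
      neg_zero, add_zero]
    by_cases hw0 : w = 0
    · rw [hw0, mul_zero, EReal.coe_ennreal_zero, ENNReal.toReal_zero, EReal.coe_zero,
        EReal.zero_mul]
    · rw [ENNReal.top_mul hw0, EReal.coe_ennreal_top, EReal.coe_mul_top_of_pos]
      exact ENNReal.toReal_pos hw0 hw
  | coe r =>
    rw [← EReal.coe_neg, ePos_coe, ePos_coe]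
    rcases le_total 0 r with hr | hr
    · have h1 : ENNReal.ofReal (-r) = 0 := ENNReal.ofReal_eq_zero.mpr (by linarith)
      rw [h1, zero_mul, EReal.coe_ennreal_zero, sub_eq_add_neg, neg_zero, add_zero,
        coe_ennreal_finite (by finiteness), ENNReal.toReal_mul,
        ENNReal.toReal_ofReal hr, ← EReal.coe_mul, mul_comm]
    · have h1 : ENNReal.ofReal r = 0 := ENNReal.ofReal_eq_zero.mpr hr
      rw [h1, zero_mul, EReal.coe_ennreal_zero, sub_eq_add_neg, zero_add,
        coe_ennreal_finite (by finiteness), ENNReal.toReal_mul,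
        ENNReal.toReal_ofReal (by linarith), ← EReal.coe_mul, ← EReal.coe_neg,
        EReal.coe_eq_coe_iff]
      ring


section Conv
variable {φ : ℝ → EReal}

lemma phi_ne_bot
    (hconv : ∀ a ∈ Ici (0 : ℝ), ∀ b ∈ Ici (0 : ℝ), ∀ t ∈ Icc (0 : ℝ) 1,
      φ (t * a + (1 - t) * b) ≤ (t : EReal) * φ a + ((1 - t : ℝ) : EReal) * φ b)
    (hφ1 : φ 1 = 0) :
    ∀ x : ℝ, 0 ≤ x → φ x ≠ ⊥ := by
  intro x hx hbot
  rcases lt_trichotomy x 1 with hx1 | hx1 | hx1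
  · set t : ℝ := 1 / (2 - x) with ht_def
    have h2x : 0 < 2 - x := by linarith
    have ht : 0 < t := by positivity
    have ht1 : t < 1 := by rw [ht_def, div_lt_one h2x]; linarith
    have hrepr : t * x + (1 - t) * 2 = 1 := by
      rw [ht_def]; field_simp; ring
    have h := hconv x hx 2 (by norm_num) t ⟨le_of_lt ht, le_of_lt ht1⟩
    rw [hrepr, hφ1, hbot, EReal.coe_mul_bot_of_pos ht, EReal.bot_add] at h
    exact absurd h (by simp)
  · rw [hx1, hφ1] at hbot; exact absurd hbot (by simp)
  · set t : ℝ := 1 / x with ht_def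
    have hx0 : 0 < x := by linarith
    have ht : 0 < t := by positivity
    have ht1 : t < 1 := by rw [ht_def, div_lt_one hx0]; linarith
    have hrepr : t * x + (1 - t) * 0 = 1 := by rw [ht_def]; field_simp; ring
    have h := hconv x hx 0 (by norm_num) t ⟨le_of_lt ht, le_of_lt ht1⟩
    rw [hrepr, hφ1, hbot, EReal.coe_mul_bot_of_pos ht, EReal.bot_add] at h
    exact absurd h (by simp)

/-- Real form of convexity when the endpoint values are finite. -/
lemma conv_real
    (hconv : ∀ a ∈ Ici (0 : ℝ), ∀ b ∈ Ici (0 : ℝ), ∀ t ∈ Icc (0 : ℝ) 1,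
      φ (t * a + (1 - t) * b) ≤ (t : EReal) * φ a + ((1 - t : ℝ) : EReal) * φ b)
    (hφ1 : φ 1 = 0)
    {x y t : ℝ} (hx : 0 ≤ x) (hy : 0 ≤ y) (ht0 : 0 ≤ t) (ht1 : t ≤ 1)
    (hfx : φ x ≠ ⊤) (hfy : φ y ≠ ⊤) :
    φ (t * x + (1 - t) * y) ≠ ⊤ ∧
      (φ (t * x + (1 - t) * y)).toReal ≤ t * (φ x).toReal + (1 - t) * (φ y).toReal := by
  have hbx := phi_ne_bot hconv hφ1 x hx
  have hby := phi_ne_bot hconv hφ1 y hy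
  have h := hconv x hx y hy t ⟨ht0, ht1⟩
  rw [← EReal.coe_toReal hfx hbx, ← EReal.coe_toReal hfy hby, ← EReal.coe_mul, ← EReal.coe_mul,
    ← EReal.coe_add] at h
  have h0 : (0:ℝ) ≤ t * x + (1 - t) * y := by
    have h1 : (0:ℝ) ≤ t * x := mul_nonneg ht0 hx
    have h2 : (0:ℝ) ≤ (1 - t) * y := mul_nonneg (by linarith) hy
    linarith
  refine ⟨fun htop => by rw [htop] at h; exact absurd (top_le_iff.mp h) (EReal.coe_ne_top _), ?_⟩
  have h5 := EReal.toReal_le_toReal h (phi_ne_bot hconv hφ1 _ h0) (EReal.coe_ne_top _)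
  rwa [EReal.toReal_coe] at h5

/-- Three-point convexity in linear (slope) form. -/
lemma slope_lin
    (hconv : ∀ a ∈ Ici (0 : ℝ), ∀ b ∈ Ici (0 : ℝ), ∀ t ∈ Icc (0 : ℝ) 1,
      φ (t * a + (1 - t) * b) ≤ (t : EReal) * φ a + ((1 - t : ℝ) : EReal) * φ b)
    (hφ1 : φ 1 = 0)
    {x z y : ℝ} (hx : 0 ≤ x) (hxz : x < z) (hzy : z < y)
    (hfx : φ x ≠ ⊤) (hfy : φ y ≠ ⊤) :
    φ z ≠ ⊤ ∧
      (φ z).toReal * (y - x) ≤ (y - z) * (φ x).toReal + (z - x) * (φ y).toReal := by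
  set t : ℝ := (y - z) / (y - x) with ht_def
  have hyx : 0 < y - x := by linarith
  have ht0 : 0 ≤ t := div_nonneg (by linarith) (by linarith)
  have ht1 : t ≤ 1 := by rw [ht_def, div_le_one hyx]; linarith
  have hrepr : t * x + (1 - t) * y = z := by rw [ht_def]; field_simp; ring
  have h := conv_real hconv hφ1 hx (by linarith) ht0 ht1 hfx hfy
  rw [hrepr] at h
  refine ⟨h.1, ?_⟩
  have h2 := h.2
  rw [ht_def] at h2
  have h3 := mul_le_mul_of_nonneg_right h2 (le_of_lt hyx)
  calc (φ z).toReal * (y - x) ≤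
      ((y - z) / (y - x) * (φ x).toReal + (1 - (y - z) / (y - x)) * (φ y).toReal) * (y - x) := h3
    _ = (y - z) * (φ x).toReal + (z - x) * (φ y).toReal := by field_simp; ring

end Conv
section Conv2
variable {φ : ℝ → EReal}
  (hconv : ∀ a ∈ Ici (0 : ℝ), ∀ b ∈ Ici (0 : ℝ), ∀ t ∈ Icc (0 : ℝ) 1,
      φ (t * a + (1 - t) * b) ≤ (t : EReal) * φ a + ((1 - t : ℝ) : EReal) * φ b)
  (hφ1 : φ 1 = 0)
include hconv hφ1

/-- Affine lower bound to the right of `w`, given a finite point `z < w`. -/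
lemma right_tail {z w : ℝ} (hz0 : 0 ≤ z) (hzw : z < w) (hfz : φ z ≠ ⊤) (hfw : φ w ≠ ⊤) :
    ∀ x, w ≤ x →
      (((φ w).toReal + (((φ w).toReal - (φ z).toReal) / (w - z)) * (x - w) : ℝ) : EReal) ≤ φ x := by
  intro x hx
  have hw0 : (0:ℝ) ≤ w := by linarith
  have hwz : (0:ℝ) < w - z := by linarith
  rcases eq_or_lt_of_le hx with rfl | hx
  · rw [sub_self, mul_zero, add_zero]
    exact EReal.coe_toReal_le (phi_ne_bot hconv hφ1 _ hw0)
  by_cases hfx : φ x = ⊤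
  · rw [hfx]; exact le_top
  have h := (slope_lin hconv hφ1 hz0 hzw hx hfz hfx).2
  refine le_trans ?_ (EReal.coe_toReal_le (phi_ne_bot hconv hφ1 _ (by linarith)))
  rw [EReal.coe_le_coe_iff]
  have h2 : ((φ w).toReal - (φ z).toReal) / (w - z) * (x - w) ≤ (φ x).toReal - (φ w).toReal := by
    rw [div_mul_eq_mul_div, div_le_iff₀ hwz]
    nlinarith [h]
  linarith

/-- Affine lower bound to the left of `w`, given a finite point `z > w`. -/
lemma left_tail {z w : ℝ} (hw0 : 0 ≤ w) (hwz : w < z) (hfz : φ z ≠ ⊤) (hfw : φ w ≠ ⊤) :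
    ∀ x, 0 ≤ x → x ≤ w →
      (((φ w).toReal + (((φ z).toReal - (φ w).toReal) / (z - w)) * (x - w) : ℝ) : EReal) ≤ φ x := by
  intro x hx0 hx
  have hzw : (0:ℝ) < z - w := by linarith
  rcases eq_or_lt_of_le hx with rfl | hx
  · rw [sub_self, mul_zero, add_zero]
    exact EReal.coe_toReal_le (phi_ne_bot hconv hφ1 _ hw0)
  by_cases hfx : φ x = ⊤
  · rw [hfx]; exact le_top
  have h := (slope_lin hconv hφ1 hx0 hx (by linarith : w < z) hfx hfz).2
  refine le_trans ?_ (EReal.coe_toReal_le (phi_ne_bot hconv hφ1 _ hx0))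
  rw [EReal.coe_le_coe_iff]
  have h2 : ((φ z).toReal - (φ w).toReal) / (z - w) * (x - w) ≤ (φ x).toReal - (φ w).toReal := by
    rw [div_mul_eq_mul_div, div_le_iff₀ hzw]
    nlinarith [h]
  linarith

/-- Constant lower bound on a compact interval with finite endpoint values
(by reflection through the midpoint). -/
lemma mid_bound {a b : ℝ} (ha0 : 0 ≤ a) (hab : a < b) (hfa : φ a ≠ ⊤) (hfb : φ b ≠ ⊤) :
    ∀ x, a ≤ x → x ≤ b →
      ((2 * (φ ((a+b)/2)).toReal - max (φ a).toReal (φ b).toReal : ℝ) : EReal) ≤ φ x := by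
  intro x hax hxb
  have hb0 : (0:ℝ) ≤ b := by linarith
  have hx0 : (0:ℝ) ≤ x := by linarith
  by_cases hfx : φ x = ⊤
  · rw [hfx]; exact le_top
  -- the reflected point
  set x' : ℝ := a + b - x with hx'_def
  have hx'0 : (0:ℝ) ≤ x' := by rw [hx'_def]; linarith
  -- φ x' is finite and bounded by max of endpoint values
  have hx'bound : φ x' ≠ ⊤ ∧ (φ x').toReal ≤ max (φ a).toReal (φ b).toReal := by
    set s : ℝ := (b - x') / (b - a) with hs_def
    have hba : (0:ℝ) < b - a := by linarith
    have hs0 : 0 ≤ s := div_nonneg (by rw [hx'_def]; linarith) (by linarith)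
    have hs1 : s ≤ 1 := by rw [hs_def, div_le_one hba, hx'_def]; linarith
    have hrepr : s * a + (1 - s) * b = x' := by rw [hs_def]; field_simp; ring
    have h := conv_real hconv hφ1 ha0 hb0 hs0 hs1 hfa hfb
    rw [hrepr] at h
    refine ⟨h.1, h.2.trans ?_⟩
    have h1 : s * (φ a).toReal ≤ s * max (φ a).toReal (φ b).toReal :=
      mul_le_mul_of_nonneg_left (le_max_left _ _) hs0
    have h2 : (1 - s) * (φ b).toReal ≤ (1 - s) * max (φ a).toReal (φ b).toReal :=
      mul_le_mul_of_nonneg_left (le_max_right _ _) (by linarith)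
    nlinarith [h1, h2]
  -- midpoint inequality
  have hmid : φ ((a+b)/2) ≠ ⊤ ∧
      (φ ((a+b)/2)).toReal ≤ (1/2 : ℝ) * (φ x).toReal + (1 - 1/2 : ℝ) * (φ x').toReal := by
    have hrepr : (1/2 : ℝ) * x + (1 - 1/2 : ℝ) * x' = (a+b)/2 := by rw [hx'_def]; ring
    have h := conv_real hconv hφ1 (t := (1/2:ℝ)) hx0 hx'0 (by norm_num) (by norm_num) hfx hx'bound.1
    rw [hrepr] at h
    exact h
  refine le_trans ?_ (EReal.coe_toReal_le (phi_ne_bot hconv hφ1 _ hx0))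
  rw [EReal.coe_le_coe_iff]
  have := hmid.2
  have := hx'bound.2
  linarith

end Conv2
section Conv3
variable {φ : ℝ → EReal}
  (hconv : ∀ a ∈ Ici (0 : ℝ), ∀ b ∈ Ici (0 : ℝ), ∀ t ∈ Icc (0 : ℝ) 1,
      φ (t * a + (1 - t) * b) ≤ (t : EReal) * φ a + ((1 - t : ℝ) : EReal) * φ b)
  (hφ1 : φ 1 = 0)
include hconv hφ1

lemma global_lower_bound :
    ∃ c : ℝ, 0 ≤ c ∧ ∀ x : ℝ, 0 ≤ x → ((-(c * (1 + x)) : ℝ) : EReal) ≤ φ x := by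
  have hf1 : φ 1 ≠ ⊤ := by rw [hφ1]; exact ne_of_beq_false rfl
  by_cases hB : ∃ b, 1 < b ∧ φ b ≠ ⊤ <;> by_cases hA : ∃ a, 0 ≤ a ∧ a < 1 ∧ φ a ≠ ⊤
  · -- both sides have finite points
    obtain ⟨b, hb1, hfb⟩ := hB
    obtain ⟨a, ha0, ha1, hfa⟩ := hA
    set ra := (φ a).toReal
    set rb := (φ b).toReal
    set sL := ((φ 1).toReal - ra) / (1 - a) with hsL
    set sR := (rb - (φ 1).toReal) / (b - 1) with hsR
    set rm := (φ ((a + b)/2)).toReal with hrm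
    set cL := |ra| + |sL| * a with hcL
    set cM := |2 * rm - max ra rb| with hcM
    set cR := |rb| + |sR| * b with hcR
    refine ⟨max (max cL cM) (max cR |sR|), by positivity, fun x hx => ?_⟩
    set c := max (max cL cM) (max cR |sR|) with hc
    have hc0 : (0:ℝ) ≤ c := by positivity
    rcases le_total x a with hxa | hax
    · refine le_trans ?_ (left_tail hconv hφ1 ha0 ha1 hf1 hfa x hx hxa)
      rw [EReal.coe_le_coe_iff]
      have habs : |x - a| ≤ a := abs_le.mpr ⟨by linarith, by linarith⟩
      have h1 : |sL * (x - a)| ≤ |sL| * a := by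
        rw [abs_mul]; exact mul_le_mul_of_nonneg_left habs (abs_nonneg _)
      have h2 := neg_abs_le (sL * (x - a))
      have h3 := neg_abs_le ra
      have h4 : cL ≤ c := le_trans (le_max_left _ _) (le_max_left _ _)
      have h5 : 0 ≤ c * x := mul_nonneg hc0 hx
      simp only [hcL] at h4
      nlinarith
    · rcases le_total x b with hxb | hbx
      · refine le_trans ?_ (mid_bound hconv hφ1 ha0 (by linarith) hfa hfb x hax hxb)
        rw [EReal.coe_le_coe_iff]
        have h3 := neg_abs_le (2 * rm - max ra rb)
        have h4 : cM ≤ c := le_trans (le_max_right _ _) (le_max_left _ _)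
        have h5 : 0 ≤ c * x := mul_nonneg hc0 hx
        simp only [hcM] at h4
        nlinarith
      · refine le_trans ?_ (right_tail hconv hφ1 (by norm_num) hb1 hf1 hfb x hbx)
        rw [EReal.coe_le_coe_iff]
        have h2 : -(|sR| * (x - b)) ≤ sR * (x - b) := by
          have := neg_abs_le (sR * (x - b))
          have : |sR * (x - b)| = |sR| * (x - b) := by
            rw [abs_mul, abs_of_nonneg (by linarith : (0:ℝ) ≤ x - b)]
          linarith [neg_abs_le (sR * (x - b))]
        have h3 := neg_abs_le rb
        have h4 : cR ≤ c := le_trans (le_max_left _ _) (le_max_right _ _)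
        have h4' : |sR| ≤ c := le_trans (le_max_right _ _) (le_max_right _ _)
        have h6 : |sR| * (x - b) ≤ |sR| * x := by
          have hb0 : (0:ℝ) ≤ b := by linarith
          nlinarith [abs_nonneg sR]
        have h7 : |sR| * x ≤ c * x := mul_le_mul_of_nonneg_right h4' hx
        simp only [hcR] at h4
        nlinarith [mul_nonneg (abs_nonneg sR) (by linarith : (0:ℝ) ≤ b)]
  · -- only right side has finite points : φ = ⊤ on [0,1)
    obtain ⟨b, hb1, hfb⟩ := hB
    push_neg at hA
    set rb := (φ b).toReal
    set sR := (rb - (φ 1).toReal) / (b - 1) with hsR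
    set rm := (φ ((1 + b)/2)).toReal with hrm
    set cM := |2 * rm - max (φ 1).toReal rb| with hcM
    set cR := |rb| + |sR| * b with hcR
    refine ⟨max cM (max cR |sR|), by positivity, fun x hx => ?_⟩
    set c := max cM (max cR |sR|) with hc
    have hc0 : (0:ℝ) ≤ c := by positivity
    rcases lt_or_ge x 1 with hx1 | h1x
    · rw [hA x hx hx1]; exact le_top
    · rcases le_total x b with hxb | hbx
      · refine le_trans ?_ (mid_bound hconv hφ1 (by norm_num) hb1 hf1 hfb x h1x hxb)
        rw [EReal.coe_le_coe_iff]
        have h3 := neg_abs_le (2 * rm - max (φ 1).toReal rb)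
        have h4 : cM ≤ c := le_max_left _ _
        have h5 : 0 ≤ c * x := mul_nonneg hc0 hx
        simp only [hcM] at h4
        nlinarith
      · refine le_trans ?_ (right_tail hconv hφ1 (by norm_num) hb1 hf1 hfb x hbx)
        rw [EReal.coe_le_coe_iff]
        have h2 : -(|sR| * (x - b)) ≤ sR * (x - b) := by
          have : |sR * (x - b)| = |sR| * (x - b) := by
            rw [abs_mul, abs_of_nonneg (by linarith : (0:ℝ) ≤ x - b)]
          linarith [neg_abs_le (sR * (x - b))]
        have h3 := neg_abs_le rb
        have h4 : cR ≤ c := le_trans (le_max_left _ _) (le_max_right _ _)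
        have h4' : |sR| ≤ c := le_trans (le_max_right _ _) (le_max_right _ _)
        have h6 : |sR| * (x - b) ≤ |sR| * x := by
          have hb0 : (0:ℝ) ≤ b := by linarith
          nlinarith [abs_nonneg sR]
        have h7 : |sR| * x ≤ c * x := mul_le_mul_of_nonneg_right h4' hx
        simp only [hcR] at h4
        nlinarith [mul_nonneg (abs_nonneg sR) (by linarith : (0:ℝ) ≤ b)]
  · -- only left side has finite points : φ = ⊤ on (1,∞)
    obtain ⟨a, ha0, ha1, hfa⟩ := hA
    push_neg at hB
    set ra := (φ a).toReal
    set sL := ((φ 1).toReal - ra) / (1 - a) with hsL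
    set rm := (φ ((a + 1)/2)).toReal with hrm
    set cL := |ra| + |sL| * a with hcL
    set cM := |2 * rm - max ra (φ 1).toReal| with hcM
    refine ⟨max cL cM, by positivity, fun x hx => ?_⟩
    set c := max cL cM with hc
    have hc0 : (0:ℝ) ≤ c := by positivity
    rcases lt_or_ge 1 x with hx1 | hx1
    · rw [hB x hx1]; exact le_top
    · rcases le_total x a with hxa | hax
      · refine le_trans ?_ (left_tail hconv hφ1 ha0 ha1 hf1 hfa x hx hxa)
        rw [EReal.coe_le_coe_iff]
        have habs : |x - a| ≤ a := abs_le.mpr ⟨by linarith, by linarith⟩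
        have h1 : |sL * (x - a)| ≤ |sL| * a := by
          rw [abs_mul]; exact mul_le_mul_of_nonneg_left habs (abs_nonneg _)
        have h2 := neg_abs_le (sL * (x - a))
        have h3 := neg_abs_le ra
        have h4 : cL ≤ c := le_max_left _ _
        have h5 : 0 ≤ c * x := mul_nonneg hc0 hx
        simp only [hcL] at h4
        nlinarith
      · refine le_trans ?_ (mid_bound hconv hφ1 ha0 ha1 hfa hf1 x hax hx1)
        rw [EReal.coe_le_coe_iff]
        have h3 := neg_abs_le (2 * rm - max ra (φ 1).toReal)
        have h4 : cM ≤ c := le_max_right _ _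
        have h5 : 0 ≤ c * x := mul_nonneg hc0 hx
        simp only [hcM] at h4
        nlinarith
  · -- φ = ⊤ away from 1
    push_neg at hA hB
    refine ⟨0, le_refl _, fun x hx => ?_⟩
    rcases lt_trichotomy x 1 with hx1 | hx1 | hx1
    · rw [hA x hx hx1]; exact le_top
    · rw [hx1, hφ1]; norm_num
    · rw [hB x hx1]; exact le_top

end Conv3
section Conv4
variable {φ : ℝ → EReal}
  (hconv : ∀ a ∈ Ici (0 : ℝ), ∀ b ∈ Ici (0 : ℝ), ∀ t ∈ Icc (0 : ℝ) 1,
      φ (t * a + (1 - t) * b) ≤ (t : EReal) * φ a + ((1 - t : ℝ) : EReal) * φ b)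
  (hφ1 : φ 1 = 0)
include hconv hφ1

lemma phi_finite_between {u a b : ℝ} (ha0 : 0 ≤ a) (hau : a < u) (hub : u < b)
    (hfa : φ a ≠ ⊤) (hfb : φ b ≠ ⊤) : φ u ≠ ⊤ :=
  (slope_lin hconv hφ1 ha0 hau hub hfa hfb).1

lemma supporting_line {u a b : ℝ} (ha0 : 0 ≤ a) (hau : a < u) (hub : u < b)
    (hfa : φ a ≠ ⊤) (hfb : φ b ≠ ⊤) :
    ∃ m : ℝ, ∀ x, 0 ≤ x → (((φ u).toReal + m * (x - u) : ℝ) : EReal) ≤ φ x := by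
  have hfu : φ u ≠ ⊤ := phi_finite_between hconv hφ1 ha0 hau hub hfa hfb
  have hu0 : (0:ℝ) ≤ u := by linarith
  set ru := (φ u).toReal
  set M : Set ℝ := {s | ∃ z, 0 ≤ z ∧ z < u ∧ φ z ≠ ⊤ ∧ s = (ru - (φ z).toReal) / (u - z)} with hM
  have hMne : M.Nonempty := ⟨(ru - (φ a).toReal) / (u - a), a, ha0, hau, hfa, rfl⟩
  have hSlopeB : ∀ s ∈ M, s ≤ ((φ b).toReal - ru) / (b - u) := by
    rintro s ⟨z, hz0, hzu, hfz, rfl⟩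
    have h := (slope_lin hconv hφ1 hz0 hzu hub hfz hfb).2
    rw [div_le_div_iff₀ (by linarith) (by linarith)]
    nlinarith
  have hMbdd : BddAbove M := ⟨_, hSlopeB⟩
  refine ⟨sSup M, fun x hx => ?_⟩
  by_cases hfx : φ x = ⊤
  · rw [hfx]; exact le_top
  refine le_trans ?_ (EReal.coe_toReal_le (phi_ne_bot hconv hφ1 _ hx))
  rw [EReal.coe_le_coe_iff]
  rcases lt_trichotomy x u with hxu | rfl | hux
  · -- x < u : the slope from x to u is in M, hence ≤ sSup M
    have hmem : (ru - (φ x).toReal) / (u - x) ∈ M := ⟨x, hx, hxu, hfx, rfl⟩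
    have hle := le_csSup hMbdd hmem
    rw [div_le_iff₀ (by linarith : (0:ℝ) < u - x)] at hle
    nlinarith
  · simp; exact le_rfl
  · -- u < x : sSup M is at most the slope from u to x
    have hle : sSup M ≤ ((φ x).toReal - ru) / (x - u) := by
      apply csSup_le hMne
      rintro s ⟨z, hz0, hzu, hfz, rfl⟩
      have h := (slope_lin hconv hφ1 hz0 hzu hux hfz hfx).2
      rw [div_le_div_iff₀ (by linarith) (by linarith)]
      nlinarith
    rw [le_div_iff₀ (by linarith : (0:ℝ) < x - u)] at hle
    nlinarith
end Conv4
section Pin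
variable {Ω : Type*} [MeasurableSpace Ω]

lemma ae_eq_of_ae_le_of_integral {μ : Measure Ω} [IsFiniteMeasure μ] {Y : Ω → ℝ} {u : ℝ}
    (hint : Integrable Y μ) (hle : ∀ᵐ ω ∂μ, Y ω ≤ u)
    (hmean : ∫ ω, Y ω ∂μ = u * (μ univ).toReal) :
    Y =ᵐ[μ] fun _ => u := by
  have hsub : Integrable (fun ω => u - Y ω) μ := (integrable_const u).sub hint
  have h0 : ∫ ω, (u - Y ω) ∂μ = 0 := by
    rw [integral_sub (integrable_const u) hint, integral_const, measureReal_def, smul_eq_mul, hmean]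
    ring
  have hnn : 0 ≤ᵐ[μ] fun ω => u - Y ω := by
    filter_upwards [hle] with ω hω
    simp only [Pi.zero_apply]; linarith
  have := (integral_eq_zero_iff_of_nonneg_ae hnn hsub).mp h0
  filter_upwards [this] with ω hω
  have : u - Y ω = 0 := hω
  linarith

lemma ae_eq_of_ae_ge_of_integral {μ : Measure Ω} [IsFiniteMeasure μ] {Y : Ω → ℝ} {u : ℝ}
    (hint : Integrable Y μ) (hge : ∀ᵐ ω ∂μ, u ≤ Y ω)
    (hmean : ∫ ω, Y ω ∂μ = u * (μ univ).toReal) :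
    Y =ᵐ[μ] fun _ => u := by
  have hsub : Integrable (fun ω => Y ω - u) μ := hint.sub (integrable_const u)
  have h0 : ∫ ω, (Y ω - u) ∂μ = 0 := by
    rw [integral_sub hint (integrable_const u), integral_const, measureReal_def, smul_eq_mul, hmean]
    ring
  have hnn : 0 ≤ᵐ[μ] fun ω => Y ω - u := by
    filter_upwards [hge] with ω hω
    simp only [Pi.zero_apply]; linarith
  have := (integral_eq_zero_iff_of_nonneg_ae hnn hsub).mp h0
  filter_upwards [this] with ω hω
  have : Y ω - u = 0 := hω
  linarith

end Pin
section Jensen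
variable {Ω : Type*} [MeasurableSpace Ω] {φ : ℝ → EReal}

lemma jensen_set
    (hconv : ∀ a ∈ Ici (0 : ℝ), ∀ b ∈ Ici (0 : ℝ), ∀ t ∈ Icc (0 : ℝ) 1,
      φ (t * a + (1 - t) * b) ≤ (t : EReal) * φ a + ((1 - t : ℝ) : EReal) * φ b)
    (hφ1 : φ 1 = 0)
    (ℙ Q : Measure Ω) [IsProbabilityMeasure ℙ] [IsProbabilityMeasure Q] (hQ : Q ≪ ℙ)
    {B : Set Ω} (hB : MeasurableSet B) (hB0 : 0 < (ℙ B).toReal) :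
    (((ℙ B).toReal : ℝ) : EReal) * φ ((Q B).toReal / (ℙ B).toReal)
      ≤ ((∫⁻ ω in B, ePos (φ ((Q.rnDeriv ℙ ω).toReal)) ∂ℙ : ℝ≥0∞) : EReal)
        - ((∫⁻ ω in B, ePos (-φ ((Q.rnDeriv ℙ ω).toReal)) ∂ℙ : ℝ≥0∞) : EReal) := by
  set Y : Ω → ℝ := fun ω => (Q.rnDeriv ℙ ω).toReal with hYdef
  have hYmeas : Measurable Y := (Measure.measurable_rnDeriv Q ℙ).ennreal_toReal
  have hY0 : ∀ ω, 0 ≤ Y ω := fun ω => ENNReal.toReal_nonneg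
  set q := (ℙ B).toReal with hqdef
  set u := (Q B).toReal / q with hudef
  have hq0 : 0 < q := hB0
  have hu0 : 0 ≤ u := div_nonneg ENNReal.toReal_nonneg (le_of_lt hq0)
  have hQB_top : Q B ≠ ⊤ := measure_ne_top Q B
  have hPB_top : ℙ B ≠ ⊤ := measure_ne_top ℙ B
  have hrn : ∫⁻ ω in B, Q.rnDeriv ℙ ω ∂ℙ = Q B := Measure.setLIntegral_rnDeriv hQ B
  have hYint : IntegrableOn Y B ℙ := by
    refine integrable_toReal_of_lintegral_ne_top (Measure.measurable_rnDeriv Q ℙ).aemeasurable ?_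
    rw [hrn]; exact hQB_top
  have hYmean : ∫ ω in B, Y ω ∂ℙ = u * q := by
    rw [hYdef, integral_toReal ((Measure.measurable_rnDeriv Q ℙ).aemeasurable)
      (ae_restrict_of_ae (Measure.rnDeriv_lt_top Q ℙ)), hrn, hudef]
    field_simp
  -- finiteness of the negative part of the integral
  obtain ⟨c, hc0, hcb⟩ := global_lower_bound hconv hφ1
  have hneg_pt : ∀ ω, ePos (-(φ (Y ω))) ≤ ENNReal.ofReal c + ENNReal.ofReal c
      * ENNReal.ofReal (Y ω) := by
    intro ω
    have h1 := hcb (Y ω) (hY0 ω)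
    have h2 : -(φ (Y ω)) ≤ ((c * (1 + Y ω) : ℝ) : EReal) := by
      rw [EReal.coe_neg] at h1
      exact EReal.neg_le_of_neg_le h1
    calc ePos (-(φ (Y ω))) ≤ ePos ((c * (1 + Y ω) : ℝ) : EReal) := ePos_mono h2
      _ = ENNReal.ofReal (c * (1 + Y ω)) := ePos_coe _
      _ = ENNReal.ofReal c + ENNReal.ofReal c * ENNReal.ofReal (Y ω) := by
        rw [ENNReal.ofReal_mul hc0, ENNReal.ofReal_add one_pos.le (hY0 ω), mul_add,
          ENNReal.ofReal_one, mul_one]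
  have hYlint_le : ∫⁻ ω in B, ENNReal.ofReal (Y ω) ∂ℙ ≤ 1 := by
    calc ∫⁻ ω in B, ENNReal.ofReal (Y ω) ∂ℙ ≤ ∫⁻ ω in B, Q.rnDeriv ℙ ω ∂ℙ :=
        lintegral_mono fun ω => ENNReal.ofReal_toReal_le
      _ = Q B := hrn
      _ ≤ 1 := prob_le_one
  have hPneg_top : (∫⁻ ω in B, ePos (-(φ (Y ω))) ∂ℙ) ≠ ⊤ := by
    have hle : (∫⁻ ω in B, ePos (-(φ (Y ω))) ∂ℙ)
        ≤ ENNReal.ofReal c * ℙ B + ENNReal.ofReal c * (∫⁻ ω in B, ENNReal.ofReal (Y ω) ∂ℙ) := by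
      calc (∫⁻ ω in B, ePos (-(φ (Y ω))) ∂ℙ)
          ≤ ∫⁻ ω in B, (ENNReal.ofReal c + ENNReal.ofReal c * ENNReal.ofReal (Y ω)) ∂ℙ :=
            lintegral_mono hneg_pt
        _ = ENNReal.ofReal c * ℙ B + ENNReal.ofReal c * (∫⁻ ω in B, ENNReal.ofReal (Y ω) ∂ℙ) := by
            rw [lintegral_add_left measurable_const, lintegral_const_mul _
              (hYmeas.ennreal_ofReal), lintegral_const, Measure.restrict_apply_univ]
    refine ne_top_of_le_ne_top ?_ hle
    exact ENNReal.add_ne_top.mpr ⟨ENNReal.mul_ne_top ENNReal.ofReal_ne_top hPB_top,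
      ENNReal.mul_ne_top ENNReal.ofReal_ne_top (ne_top_of_le_ne_top (by simp) hYlint_le)⟩
  by_cases hEa : ∃ z, 0 ≤ z ∧ z < u ∧ φ z ≠ ⊤
  · by_cases hEb : ∃ z, u < z ∧ φ z ≠ ⊤
    · -- interior case : there is a supporting line at u
      obtain ⟨a, ha0, hau, hfa⟩ := hEa
      obtain ⟨b, hub, hfb⟩ := hEb
      have hfu : φ u ≠ ⊤ := phi_finite_between hconv hφ1 ha0 hau hub hfa hfb
      have hbu : φ u ≠ ⊥ := phi_ne_bot hconv hφ1 u hu0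
      obtain ⟨m, hm⟩ := supporting_line hconv hφ1 ha0 hau hub hfa hfb
      set ru := (φ u).toReal with hrudef
      set l : Ω → ℝ := fun ω => ru + m * (Y ω - u) with hldef
      have hlmeas : Measurable l := by
        apply Measurable.add measurable_const
        exact ((hYmeas.sub measurable_const).const_mul m)
      have hg : Integrable (fun ω => m * (Y ω - u)) (ℙ.restrict B) := by
        have h5 := (hYint.sub (integrable_const u)).const_mul m
        simpa using h5
      have hlint : Integrable l (ℙ.restrict B) := (integrable_const ru).add hg
      have hpoint : ∀ ω, ENNReal.ofReal (l ω) + ePos (-(φ (Y ω)))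
          ≤ ePos (φ (Y ω)) + ENNReal.ofReal (-(l ω)) := by
        intro ω
        have hble : ((l ω : ℝ) : EReal) ≤ φ (Y ω) := hm (Y ω) (hY0 ω)
        have h4 := ePos_add_ePos_neg_le hble
        rwa [ePos_coe, ← EReal.coe_neg, ePos_coe] at h4
      set Ppos := ∫⁻ ω in B, ePos (φ (Y ω)) ∂ℙ with hPposdef
      set Pneg := ∫⁻ ω in B, ePos (-(φ (Y ω))) ∂ℙ with hPnegdef
      set Lpos := ∫⁻ ω in B, ENNReal.ofReal (l ω) ∂ℙ with hLposdef
      set Lneg := ∫⁻ ω in B, ENNReal.ofReal (-(l ω)) ∂ℙ with hLnegdef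
      have hkey : Lpos + Pneg ≤ Ppos + Lneg := by
        calc Lpos + Pneg ≤ ∫⁻ ω in B, (ENNReal.ofReal (l ω) + ePos (-(φ (Y ω)))) ∂ℙ :=
            le_lintegral_add _ _
          _ ≤ ∫⁻ ω in B, (ePos (φ (Y ω)) + ENNReal.ofReal (-(l ω))) ∂ℙ :=
            lintegral_mono hpoint
          _ = Ppos + Lneg := lintegral_add_right _ (hlmeas.neg.ennreal_ofReal)
      have hLpos_top : Lpos ≠ ⊤ := by
        refine ne_top_of_le_ne_top hlint.2.ne ?_
        exact lintegral_ofReal_le_lintegral_enorm l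
      have hLneg_top : Lneg ≠ ⊤ := by
        refine ne_top_of_le_ne_top hlint.neg.2.ne ?_
        exact lintegral_ofReal_le_lintegral_enorm (fun ω => -(l ω))
      have hIeq : ∫ ω in B, l ω ∂ℙ = Lpos.toReal - Lneg.toReal :=
        integral_eq_lintegral_pos_part_sub_lintegral_neg_part hlint
      have hIval : ∫ ω in B, (ru + m * (Y ω - u)) ∂ℙ = q * ru := by
        rw [integral_add (integrable_const ru) hg, integral_const, integral_const_mul,
          integral_sub hYint (integrable_const u), integral_const,
          measureReal_restrict_apply_univ, measureReal_def, ← hqdef, hYmean, smul_eq_mul, smul_eq_mul]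
        ring
      calc (((q : ℝ)) : EReal) * φ u = ((q * ru : ℝ) : EReal) := by
            rw [← EReal.coe_toReal hfu hbu, ← EReal.coe_mul]
        _ = ((Lpos : ℝ≥0∞) : EReal) - ((Lneg : ℝ≥0∞) : EReal) := by
            rw [coe_ennreal_finite hLpos_top, coe_ennreal_finite hLneg_top, ← EReal.coe_sub,
              EReal.coe_eq_coe_iff]
            rw [← hIeq]; exact hIval.symm
        _ ≤ ((Ppos : ℝ≥0∞) : EReal) - ((Pneg : ℝ≥0∞) : EReal) := eSub_le_eSub hkey hPneg_top
    · -- φ = ⊤ above u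
      push_neg at hEb
      rcases eq_or_ne (ℙ.restrict B {ω | u < Y ω}) 0 with hnull | hnull
      · -- Y ≤ u a.e. on B, so Y = u a.e. on B
        have hle : ∀ᵐ ω ∂(ℙ.restrict B), Y ω ≤ u := by
          rw [ae_iff]
          convert hnull using 2
          ext ω; simp [not_le]
        have hae : Y =ᵐ[ℙ.restrict B] fun _ => u := by
          refine ae_eq_of_ae_le_of_integral hYint hle ?_
          rw [Measure.restrict_apply_univ, hYmean]
        have hbu : φ u ≠ ⊥ := phi_ne_bot hconv hφ1 u hu0
        have hg1 : (fun ω => ePos (φ (Y ω))) =ᵐ[ℙ.restrict B] fun _ => ePos (φ u) :=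
          hae.fun_comp (fun y => ePos (φ y))
        have hg2 : (fun ω => ePos (-(φ (Y ω)))) =ᵐ[ℙ.restrict B] fun _ => ePos (-(φ u)) :=
          hae.fun_comp (fun y => ePos (-(φ y)))
        rw [lintegral_congr_ae hg1, lintegral_congr_ae hg2, lintegral_const, lintegral_const,
          Measure.restrict_apply_univ, ePos_mul_sub hbu hPB_top]
      · -- positive mass above u : the positive part is infinite
        have hset : MeasurableSet {ω | u < Y ω} := measurableSet_lt measurable_const hYmeas
        have htop : ∫⁻ ω in {ω | u < Y ω}, ePos (φ (Y ω)) ∂(ℙ.restrict B) = ⊤ := by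
          have heq : ∫⁻ ω in {ω | u < Y ω}, ePos (φ (Y ω)) ∂(ℙ.restrict B)
              = ∫⁻ _ in {ω | u < Y ω}, (⊤ : ℝ≥0∞) ∂(ℙ.restrict B) := by
            refine setLIntegral_congr_fun hset (fun ω hω => ?_)
            rw [hEb (Y ω) hω, ePos_top]
          rw [heq, setLIntegral_const, ENNReal.top_mul hnull]
        have hPpos_top : (∫⁻ ω in B, ePos (φ (Y ω)) ∂ℙ) = ⊤ :=
          top_le_iff.mp (htop ▸ setLIntegral_le_lintegral _ _)
        rw [hPpos_top, EReal.coe_ennreal_top, coe_ennreal_finite hPneg_top, EReal.top_sub_coe]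
        exact le_top
  · -- φ = ⊤ below u
    push_neg at hEa
    rcases eq_or_ne (ℙ.restrict B {ω | Y ω < u}) 0 with hnull | hnull
    · have hge : ∀ᵐ ω ∂(ℙ.restrict B), u ≤ Y ω := by
        rw [ae_iff]
        convert hnull using 2
        ext ω; simp [not_le]
      have hae : Y =ᵐ[ℙ.restrict B] fun _ => u := by
        refine ae_eq_of_ae_ge_of_integral hYint hge ?_
        rw [Measure.restrict_apply_univ, hYmean]
      have hbu : φ u ≠ ⊥ := phi_ne_bot hconv hφ1 u hu0
      have hg1 : (fun ω => ePos (φ (Y ω))) =ᵐ[ℙ.restrict B] fun _ => ePos (φ u) :=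
        hae.fun_comp (fun y => ePos (φ y))
      have hg2 : (fun ω => ePos (-(φ (Y ω)))) =ᵐ[ℙ.restrict B] fun _ => ePos (-(φ u)) :=
        hae.fun_comp (fun y => ePos (-(φ y)))
      rw [lintegral_congr_ae hg1, lintegral_congr_ae hg2, lintegral_const, lintegral_const,
        Measure.restrict_apply_univ, ePos_mul_sub hbu hPB_top]
    · have hset : MeasurableSet {ω | Y ω < u} := measurableSet_lt hYmeas measurable_const
      have htop : ∫⁻ ω in {ω | Y ω < u}, ePos (φ (Y ω)) ∂(ℙ.restrict B) = ⊤ := by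
        have heq : ∫⁻ ω in {ω | Y ω < u}, ePos (φ (Y ω)) ∂(ℙ.restrict B)
            = ∫⁻ _ in {ω | Y ω < u}, (⊤ : ℝ≥0∞) ∂(ℙ.restrict B) := by
          refine setLIntegral_congr_fun hset (fun ω hω => ?_)
          rw [hEa (Y ω) (hY0 ω) hω, ePos_top]
        rw [heq, setLIntegral_const, ENNReal.top_mul hnull]
      have hPpos_top : (∫⁻ ω in B, ePos (φ (Y ω)) ∂ℙ) = ⊤ :=
        top_le_iff.mp (htop ▸ setLIntegral_le_lintegral _ _)
      rw [hPpos_top, EReal.coe_ennreal_top, coe_ennreal_finite hPneg_top, EReal.top_sub_coe]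
      exact le_top

end Jensen
section NegPart
variable {Ω : Type*} [MeasurableSpace Ω] {φ : ℝ → EReal}

lemma neg_part_ne_top
    (hconv : ∀ a ∈ Ici (0 : ℝ), ∀ b ∈ Ici (0 : ℝ), ∀ t ∈ Icc (0 : ℝ) 1,
      φ (t * a + (1 - t) * b) ≤ (t : EReal) * φ a + ((1 - t : ℝ) : EReal) * φ b)
    (hφ1 : φ 1 = 0)
    (ℙ Q : Measure Ω) [IsProbabilityMeasure ℙ] [IsProbabilityMeasure Q] (hQ : Q ≪ ℙ)
    (B : Set Ω) :
    (∫⁻ ω in B, ePos (-φ ((Q.rnDeriv ℙ ω).toReal)) ∂ℙ) ≠ ⊤ := by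
  set Y : Ω → ℝ := fun ω => (Q.rnDeriv ℙ ω).toReal with hYdef
  have hYmeas : Measurable Y := (Measure.measurable_rnDeriv Q ℙ).ennreal_toReal
  have hY0 : ∀ ω, 0 ≤ Y ω := fun ω => ENNReal.toReal_nonneg
  obtain ⟨c, hc0, hcb⟩ := global_lower_bound hconv hφ1
  have hneg_pt : ∀ ω, ePos (-(φ (Y ω))) ≤ ENNReal.ofReal c + ENNReal.ofReal c
      * ENNReal.ofReal (Y ω) := by
    intro ω
    have h1 := hcb (Y ω) (hY0 ω)
    have h2 : -(φ (Y ω)) ≤ ((c * (1 + Y ω) : ℝ) : EReal) := by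
      rw [EReal.coe_neg] at h1
      exact EReal.neg_le_of_neg_le h1
    calc ePos (-(φ (Y ω))) ≤ ePos ((c * (1 + Y ω) : ℝ) : EReal) := ePos_mono h2
      _ = ENNReal.ofReal (c * (1 + Y ω)) := ePos_coe _
      _ = ENNReal.ofReal c + ENNReal.ofReal c * ENNReal.ofReal (Y ω) := by
        rw [ENNReal.ofReal_mul hc0, ENNReal.ofReal_add one_pos.le (hY0 ω), mul_add,
          ENNReal.ofReal_one, mul_one]
  have hYlint_le : ∫⁻ ω in B, ENNReal.ofReal (Y ω) ∂ℙ ≤ 1 := by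
    calc ∫⁻ ω in B, ENNReal.ofReal (Y ω) ∂ℙ ≤ ∫⁻ ω in B, Q.rnDeriv ℙ ω ∂ℙ :=
        lintegral_mono fun ω => ENNReal.ofReal_toReal_le
      _ = Q B := Measure.setLIntegral_rnDeriv hQ B
      _ ≤ 1 := prob_le_one
  have hle : (∫⁻ ω in B, ePos (-(φ (Y ω))) ∂ℙ)
      ≤ ENNReal.ofReal c * ℙ B + ENNReal.ofReal c * (∫⁻ ω in B, ENNReal.ofReal (Y ω) ∂ℙ) := by
    calc (∫⁻ ω in B, ePos (-(φ (Y ω))) ∂ℙ)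
        ≤ ∫⁻ ω in B, (ENNReal.ofReal c + ENNReal.ofReal c * ENNReal.ofReal (Y ω)) ∂ℙ :=
          lintegral_mono hneg_pt
      _ = ENNReal.ofReal c * ℙ B + ENNReal.ofReal c * (∫⁻ ω in B, ENNReal.ofReal (Y ω) ∂ℙ) := by
          rw [lintegral_add_left measurable_const, lintegral_const_mul _
            (hYmeas.ennreal_ofReal), lintegral_const, Measure.restrict_apply_univ]
  refine ne_top_of_le_ne_top ?_ hle
  exact ENNReal.add_ne_top.mpr ⟨ENNReal.mul_ne_top ENNReal.ofReal_ne_top (measure_ne_top ℙ B),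
    ENNReal.mul_ne_top ENNReal.ofReal_ne_top (ne_top_of_le_ne_top (by simp) hYlint_le)⟩

end NegPart

/-- The worst-case probability of an event `A` over the φ-divergence ball
`𝓟_φ(ℙ,δ)` equals `sup {t ∈ [ℙ(A),1] : ℙ(A)φ(t/ℙ(A)) + (1-ℙ(A))φ((1-t)/(1-ℙ(A))) ≤ δ}`. -/
theorem stmt_9 {Ω : Type*} [MeasurableSpace Ω] (ℙ : Measure Ω) [IsProbabilityMeasure ℙ]
    (φ : ℝ → EReal)
    (hconv : ∀ a ∈ Ici (0 : ℝ), ∀ b ∈ Ici (0 : ℝ), ∀ t ∈ Icc (0 : ℝ) 1,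
      φ (t * a + (1 - t) * b) ≤ (t : EReal) * φ a + ((1 - t : ℝ) : EReal) * φ b)
    (hφ1 : φ 1 = 0)
    (hφ0 : Tendsto φ (nhdsWithin 0 (Ioi 0)) (nhds (φ 0)))
    (δ : ℝ) (hδ : 0 < δ)
    (A : Set Ω) (hA : MeasurableSet A)
    (hA0 : 0 < (ℙ A).toReal) (hA1 : (ℙ A).toReal < 1) :
    (⨆ Q ∈ {Q : Measure Ω | IsProbabilityMeasure Q ∧ Q ≪ ℙ ∧
        eIntegral ℙ (fun ω => φ ((Q.rnDeriv ℙ ω).toReal)) ≤ (δ : EReal)},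
      (Q A).toReal) =
    sSup {t : ℝ | t ∈ Icc ((ℙ A).toReal) 1 ∧
      (((ℙ A).toReal : ℝ) : EReal) * φ (t / (ℙ A).toReal) +
        ((1 - (ℙ A).toReal : ℝ) : EReal) * φ ((1 - t) / (1 - (ℙ A).toReal)) ≤ (δ : EReal)} := by
  classical
  set p := (ℙ A).toReal with hpdef
  have hAc : MeasurableSet Aᶜ := hA.compl
  have hPA_top : ℙ A ≠ ⊤ := measure_ne_top ℙ A
  have hPAc : (ℙ Aᶜ).toReal = 1 - p := by
    rw [prob_compl_eq_one_sub hA, ENNReal.toReal_sub_of_le prob_le_one (by simp),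
      ENNReal.toReal_one]
  set S := {t : ℝ | t ∈ Icc p 1 ∧
      ((p : ℝ) : EReal) * φ (t / p) + ((1 - p : ℝ) : EReal) * φ ((1 - t) / (1 - p))
        ≤ (δ : EReal)} with hSdef
  set 𝒮 := {Q : Measure Ω | IsProbabilityMeasure Q ∧ Q ≪ ℙ ∧
      eIntegral ℙ (fun ω => φ ((Q.rnDeriv ℙ ω).toReal)) ≤ (δ : EReal)} with h𝒮def
  have hpS : p ∈ S := by
    refine ⟨⟨le_refl p, le_of_lt hA1⟩, ?_⟩
    rw [div_self (ne_of_gt hA0), div_self (by linarith : (1:ℝ) - p ≠ 0), hφ1,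
      mul_zero, mul_zero, add_zero]
    exact_mod_cast le_of_lt hδ
  have hSbdd : BddAbove S := ⟨1, fun t ht => ht.1.2⟩
  have hSne : S.Nonempty := ⟨p, hpS⟩
  have hpsSup : p ≤ sSup S := le_csSup hSbdd hpS
  have hsSup0 : (0:ℝ) ≤ sSup S := le_trans (le_of_lt hA0) hpsSup
  have hFle : ∀ Q : Measure Ω, (⨆ _ : Q ∈ 𝒮, (Q A).toReal) ≤ 1 := by
    intro Q
    refine Real.iSup_le (fun hQ => ?_) zero_le_one
    haveI := hQ.1
    calc (Q A).toReal ≤ (Q univ).toReal :=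
        ENNReal.toReal_mono (measure_ne_top Q univ) (measure_mono (subset_univ A))
      _ = 1 := by rw [measure_univ, ENNReal.toReal_one]
  apply le_antisymm
  · -- the sup over the ball is at most sSup S
    refine Real.iSup_le (fun Q => ?_) hsSup0
    refine Real.iSup_le (fun hQ => ?_) hsSup0
    obtain ⟨hQprob, hQac, hQdiv⟩ := hQ
    haveI := hQprob
    set t := (Q A).toReal with htdef
    rcases le_total t p with htp | hpt
    · exact le_trans htp hpsSup
    refine le_csSup hSbdd ?_
    have ht1 : t ≤ 1 := by
      calc t ≤ (Q univ).toReal :=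
          ENNReal.toReal_mono (measure_ne_top Q univ) (measure_mono (subset_univ A))
        _ = 1 := by rw [measure_univ, ENNReal.toReal_one]
    have hQAc : (Q Aᶜ).toReal = 1 - t := by
      rw [prob_compl_eq_one_sub hA, ENNReal.toReal_sub_of_le prob_le_one (by simp),
        ENNReal.toReal_one]
    have hPAc0 : 0 < (ℙ Aᶜ).toReal := by rw [hPAc]; linarith
    have hJA := jensen_set hconv hφ1 ℙ Q hQac hA hA0
    have hJAc := jensen_set hconv hφ1 ℙ Q hQac hAc hPAc0
    rw [hPAc, hQAc] at hJAc
    have hnegA := neg_part_ne_top hconv hφ1 ℙ Q hQac A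
    have hnegAc := neg_part_ne_top hconv hφ1 ℙ Q hQac Aᶜ
    have hkey : ((p : ℝ) : EReal) * φ (t / p) + ((1 - p : ℝ) : EReal) * φ ((1 - t) / (1 - p))
        ≤ eIntegral ℙ (fun ω => φ ((Q.rnDeriv ℙ ω).toReal)) := by
      rw [eIntegral, ← lintegral_add_compl (fun ω => ePos (φ ((Q.rnDeriv ℙ ω).toReal))) hA,
        ← lintegral_add_compl (fun ω => ePos (-φ ((Q.rnDeriv ℙ ω).toReal))) hA,
        eSub_add_eq hnegA hnegAc]
      exact add_le_add hJA hJAc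
    exact ⟨⟨hpt, ht1⟩, le_trans hkey hQdiv⟩
  · -- every t ∈ S is attained by some measure in the ball
    refine csSup_le hSne (fun t ht => ?_)
    obtain ⟨⟨hpt, ht1⟩, hdiv⟩ := ht
    have ht0 : 0 ≤ t := le_trans (le_of_lt hA0) hpt
    have hu0 : 0 ≤ t / p := div_nonneg ht0 (le_of_lt hA0)
    have hv0 : 0 ≤ (1 - t) / (1 - p) := div_nonneg (by linarith) (by linarith)
    set f : Ω → ℝ≥0∞ := A.piecewise (fun _ => ENNReal.ofReal (t / p))
      (fun _ => ENNReal.ofReal ((1 - t) / (1 - p))) with hfdef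
    have hfmeas : Measurable f := Measurable.piecewise hA measurable_const measurable_const
    set Q := ℙ.withDensity f with hQdef
    have hfA : ∀ ω ∈ A, f ω = ENNReal.ofReal (t / p) := fun ω hω =>
      Set.piecewise_eq_of_mem _ _ _ hω
    have hfAc : ∀ ω ∈ Aᶜ, f ω = ENNReal.ofReal ((1 - t) / (1 - p)) := fun ω hω =>
      Set.piecewise_eq_of_notMem _ _ _ hω
    have hPA_eq : ℙ A = ENNReal.ofReal p := (ENNReal.ofReal_toReal hPA_top).symm
    have hPAc_eq : ℙ Aᶜ = ENNReal.ofReal (1 - p) := by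
      rw [← hPAc]; exact (ENNReal.ofReal_toReal (measure_ne_top ℙ Aᶜ)).symm
    have hQA : Q A = ENNReal.ofReal t := by
      rw [hQdef, withDensity_apply _ hA,
        setLIntegral_congr_fun hA hfA,
        setLIntegral_const, hPA_eq, ← ENNReal.ofReal_mul hu0,
        div_mul_cancel₀ t (ne_of_gt hA0)]
    have hQAc : Q Aᶜ = ENNReal.ofReal (1 - t) := by
      rw [hQdef, withDensity_apply _ hAc,
        setLIntegral_congr_fun hAc hfAc,
        setLIntegral_const, hPAc_eq, ← ENNReal.ofReal_mul hv0,
        div_mul_cancel₀ (1 - t) (by linarith : (1:ℝ) - p ≠ 0)]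
    haveI hQprob : IsProbabilityMeasure Q := by
      constructor
      rw [← measure_add_measure_compl hA, hQA, hQAc, ← ENNReal.ofReal_add ht0 (by linarith),
        add_sub_cancel, ENNReal.ofReal_one]
    have hQac : Q ≪ ℙ := withDensity_absolutelyContinuous ℙ f
    have hrn : Q.rnDeriv ℙ =ᵐ[ℙ] f := Measure.rnDeriv_withDensity ℙ hfmeas
    have hcongr1 : (fun ω => ePos (φ ((Q.rnDeriv ℙ ω).toReal)))
        =ᵐ[ℙ] fun ω => ePos (φ ((f ω).toReal)) := by
      filter_upwards [hrn] with ω h; rw [h]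
    have hcongr2 : (fun ω => ePos (-φ ((Q.rnDeriv ℙ ω).toReal)))
        =ᵐ[ℙ] fun ω => ePos (-φ ((f ω).toReal)) := by
      filter_upwards [hrn] with ω h; rw [h]
    have hposint : ∫⁻ ω, ePos (φ ((f ω).toReal)) ∂ℙ
        = ePos (φ (t / p)) * ℙ A + ePos (φ ((1 - t) / (1 - p))) * ℙ Aᶜ := by
      rw [← lintegral_add_compl (fun ω => ePos (φ ((f ω).toReal))) hA]
      congr 1
      · rw [setLIntegral_congr_fun hA ((fun ω hω => by
          rw [hfA ω hω, ENNReal.toReal_ofReal hu0])),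
          setLIntegral_const]
      · rw [setLIntegral_congr_fun hAc ((fun ω hω => by
          rw [hfAc ω hω, ENNReal.toReal_ofReal hv0])),
          setLIntegral_const]
    have hnegint : ∫⁻ ω, ePos (-φ ((f ω).toReal)) ∂ℙ
        = ePos (-φ (t / p)) * ℙ A + ePos (-φ ((1 - t) / (1 - p))) * ℙ Aᶜ := by
      rw [← lintegral_add_compl (fun ω => ePos (-φ ((f ω).toReal))) hA]
      congr 1
      · rw [setLIntegral_congr_fun hA ((fun ω hω => by
          rw [hfA ω hω, ENNReal.toReal_ofReal hu0])),
          setLIntegral_const]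
      · rw [setLIntegral_congr_fun hAc ((fun ω hω => by
          rw [hfAc ω hω, ENNReal.toReal_ofReal hv0])),
          setLIntegral_const]
    have hbu : φ (t / p) ≠ ⊥ := phi_ne_bot hconv hφ1 _ hu0
    have hbv : φ ((1 - t) / (1 - p)) ≠ ⊥ := phi_ne_bot hconv hφ1 _ hv0
    have hTu : ePos (-φ (t / p)) ≠ ⊤ := by
      intro h
      have h1 : -φ (t / p) = ⊤ := not_not.mp (fun hh => ePos_ne_top hh h)
      exact hbu (by rw [← neg_neg (φ (t / p)), h1, EReal.neg_top])
    have hTv : ePos (-φ ((1 - t) / (1 - p))) ≠ ⊤ := by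
      intro h
      have h1 : -φ ((1 - t) / (1 - p)) = ⊤ := not_not.mp (fun hh => ePos_ne_top hh h)
      exact hbv (by rw [← neg_neg (φ ((1 - t) / (1 - p))), h1, EReal.neg_top])
    have heI : eIntegral ℙ (fun ω => φ ((Q.rnDeriv ℙ ω).toReal))
        = ((p : ℝ) : EReal) * φ (t / p)
          + ((1 - p : ℝ) : EReal) * φ ((1 - t) / (1 - p)) := by
      rw [eIntegral, lintegral_congr_ae hcongr1, lintegral_congr_ae hcongr2, hposint, hnegint,
        eSub_add_eq (ENNReal.mul_ne_top hTu hPA_top)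
          (ENNReal.mul_ne_top hTv (measure_ne_top ℙ Aᶜ)),
        ePos_mul_sub hbu hPA_top, ePos_mul_sub hbv (measure_ne_top ℙ Aᶜ), ← hpdef, hPAc]
    have hmem : Q ∈ 𝒮 := ⟨hQprob, hQac, by rw [heI]; exact hdiv⟩
    have htQ : t = (Q A).toReal := by rw [hQA, ENNReal.toReal_ofReal ht0]
    have houter : BddAbove (range fun Q : Measure Ω => ⨆ _ : Q ∈ 𝒮, (Q A).toReal) := by
      refine ⟨1, ?_⟩
      rintro x ⟨Q', rfl⟩
      exact hFle Q'
    calc t = (Q A).toReal := htQ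
      _ ≤ ⨆ _ : Q ∈ 𝒮, (Q A).toReal := by
          refine le_ciSup (f := fun _ : Q ∈ 𝒮 => (Q A).toReal) ?_ hmem
          exact ⟨(Q A).toReal, by rintro x ⟨_, rfl⟩; exact le_refl _⟩
      _ ≤ ⨆ Q ∈ 𝒮, (Q A).toReal :=
          le_ciSup (f := fun Q : Measure Ω => ⨆ _ : Q ∈ 𝒮, (Q A).toReal) houter Q
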